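/- With the same alternating random product Y_t in the dihedral group D_{2l} of order 4l (l ≥ 4), the probability that the word length |Y_t| lies in the interval [3l/2, 2l] is at most the probability that |Y_t| lies in [l/2, 3l/2]. -/

import Mathlib

/-- Word length of `g` with respect to a set `S` of generators. -/
noncomputable def lengthWrt {G : Type*} [Group G] (S : Set G) (g : G) : ℕ :=
  sInf {n | ∃ L : List G, (∀ x ∈ L, x ∈ S) ∧ L.length = n ∧ L.prod = g}

/-- The generators `a = sr 0`, `b = sr 1` of the dihedral group. -/
def dihGens (l : ℕ) : Set (DihedralGroup l) := {DihedralGroup.sr 0, DihedralGroup.sr 1}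

/-- The alternating random product `Y_t = a^{ε₁} b^{ε₂} a^{ε₃} ⋯` (t factors). -/
def altProd (l t : ℕ) (ε : Fin t → Bool) : DihedralGroup l :=
  ((List.finRange t).map (fun i =>
    if ε i then (if (i : ℕ) % 2 = 0 then DihedralGroup.sr 0 else DihedralGroup.sr 1)
    else 1)).prod

open DihedralGroup Finset

namespace Stmt6Aux

variable {n : ℕ}

lemma val_add_one_le [NeZero n] (x : ZMod n) : (x + 1).val ≤ x.val + 1 := by
  have h1 : (1 : ZMod n).val = 1 % n := by rw [← Nat.cast_one, ZMod.val_natCast]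
  have := ZMod.val_add_le x 1
  have h2 : 1 % n ≤ 1 := Nat.mod_le 1 n
  omega

lemma val_sub_one [NeZero n] {x : ZMod n} (hx : x ≠ 0) : (x - 1).val = x.val - 1 := by
  have h1 : 1 ≤ x.val := by
    rcases Nat.eq_zero_or_pos x.val with h | h
    · exact absurd ((ZMod.val_eq_zero x).mp h) hx
    · exact h
  have hc : ((x.val - 1 : ℕ) : ZMod n) = x - 1 := by
    rw [Nat.cast_sub h1, ZMod.natCast_zmod_val, Nat.cast_one]
  rw [← hc, ZMod.val_cast_of_lt (lt_of_le_of_lt (Nat.sub_le _ _) (ZMod.val_lt x))]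

/-- cycle distance of a rotation parameter to 0 -/
def dC (x : ZMod n) : ℕ := min x.val (-x).val

/-- "reflection distance": relevant quantity for reflections -/
def dR (x : ZMod n) : ℕ := min (x - 1).val (-x).val

lemma dC_neg (x : ZMod n) : dC (-x) = dC x := by
  simp [dC, Nat.min_comm]

lemma dR_le_dC [NeZero n] (x : ZMod n) : dR x ≤ dC x := by
  by_cases hx : x = 0
  · subst hx; simp [dR, dC]
  · rw [dR, val_sub_one hx]
    exact min_le_min (Nat.sub_le _ _) le_rfl

lemma dR_one_add_le_dC [NeZero n] (x : ZMod n) : dR (1 + x) ≤ dC x := by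
  by_cases hx : x = 0
  · subst hx; simp [dR, dC]
  · have h1 : (1 : ZMod n) + x - 1 = x := by ring
    have h2 : (-(1 + x)) = (-x) - 1 := by ring
    have h3 : (-x) ≠ 0 := neg_ne_zero.mpr hx
    rw [dR, h1, h2, val_sub_one h3]
    exact min_le_min le_rfl (Nat.sub_le _ _)

lemma dC_le_dR_add_one [NeZero n] (x : ZMod n) : dC x ≤ dR x + 1 := by
  have h1 : x.val ≤ (x - 1).val + 1 := by
    have := val_add_one_le (x - 1)
    rwa [sub_add_cancel] at this
  have : min x.val (-x).val ≤ min ((x-1).val + 1) ((-x).val + 1) :=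
    min_le_min h1 (Nat.le_succ _)
  rw [Nat.succ_min_succ] at this
  exact this

lemma dC_sub_one_le [NeZero n] (x : ZMod n) : dC (x - 1) ≤ dR x + 1 := by
  have h2 : (-(x - 1)) = (-x) + 1 := by ring
  have h1 : (-(x-1)).val ≤ (-x).val + 1 := by rw [h2]; exact val_add_one_le _
  have : min (x-1).val (-(x-1)).val ≤ min ((x-1).val + 1) ((-x).val + 1) :=
    min_le_min (Nat.le_succ _) h1
  rw [Nat.succ_min_succ] at this
  exact this

lemma mem_dihGens {x : DihedralGroup n} : x ∈ dihGens n ↔ x = sr 0 ∨ x = sr 1 := by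
  simp [dihGens]

lemma prod_len_bound [NeZero n] (L : List (DihedralGroup n)) :
    (∀ x ∈ L, x ∈ dihGens n) →
    (∀ k, L.prod = r k → 2 * dC k ≤ L.length) ∧
      (∀ k, L.prod = sr k → 2 * dR k + 1 ≤ L.length) := by
  induction L with
  | nil =>
    intro _
    constructor
    · intro k hk
      rw [List.prod_nil, one_def] at hk
      obtain rfl : (0 : ZMod n) = k := by injection hk
      simp [dC]
    · intro k hk
      rw [List.prod_nil, one_def] at hk
      exact absurd hk (by intro h; cases h)
  | cons x T ih =>
    intro hL
    obtain ⟨ihr, ihs⟩ := ih (fun y hy => hL y (List.mem_cons_of_mem _ hy))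
    have hx := mem_dihGens.mp (hL x List.mem_cons_self)
    rw [List.prod_cons] at *
    cases hT : T.prod with
    | r k' =>
      have hb := ihr k' hT
      constructor
      · intro k hk
        rcases hx with rfl | rfl <;> rw [sr_mul_r] at hk <;> exact absurd hk (by simp)
      · intro k hk
        rcases hx with rfl | rfl <;> rw [sr_mul_r] at hk
        · obtain rfl : (0 : ZMod n) + k' = k := by injection hk
          rw [zero_add]
          have := dR_le_dC k'
          simp only [List.length_cons]
          omega
        · obtain rfl : (1 : ZMod n) + k' = k := by injection hk
          have := dR_one_add_le_dC k'
          simp only [List.length_cons]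
          omega
    | sr k' =>
      have hb := ihs k' hT
      constructor
      · intro k hk
        rcases hx with rfl | rfl <;> rw [sr_mul_sr] at hk
        · obtain rfl : k' - 0 = k := by injection hk
          rw [sub_zero]
          have := dC_le_dR_add_one k'
          simp only [List.length_cons]
          omega
        · obtain rfl : k' - 1 = k := by injection hk
          have := dC_sub_one_le k'
          simp only [List.length_cons]
          omega
      · intro k hk
        rcases hx with rfl | rfl <;> rw [sr_mul_sr] at hk <;> exact absurd hk (by simp)

def wordP (n : ℕ) : ℕ → List (DihedralGroup n)
  | 0 => []
  | k+1 => sr 0 :: sr 1 :: wordP n k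

def wordM (n : ℕ) : ℕ → List (DihedralGroup n)
  | 0 => []
  | k+1 => sr 1 :: sr 0 :: wordM n k

lemma wordP_length (k : ℕ) : (wordP n k).length = 2 * k := by
  induction k with
  | zero => rfl
  | succ k ih => simp [wordP, ih]; omega

lemma wordM_length (k : ℕ) : (wordM n k).length = 2 * k := by
  induction k with
  | zero => rfl
  | succ k ih => simp [wordM, ih]; omega

lemma wordP_mem (k : ℕ) : ∀ x ∈ wordP n k, x ∈ dihGens n := by
  induction k with
  | zero => simp [wordP]
  | succ k ih =>
    intro x hx
    rcases hx with _ | ⟨_, hx⟩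
    · exact mem_dihGens.mpr (Or.inl rfl)
    · rcases hx with _ | ⟨_, hx⟩
      · exact mem_dihGens.mpr (Or.inr rfl)
      · exact ih x hx

lemma wordM_mem (k : ℕ) : ∀ x ∈ wordM n k, x ∈ dihGens n := by
  induction k with
  | zero => simp [wordM]
  | succ k ih =>
    intro x hx
    rcases hx with _ | ⟨_, hx⟩
    · exact mem_dihGens.mpr (Or.inr rfl)
    · rcases hx with _ | ⟨_, hx⟩
      · exact mem_dihGens.mpr (Or.inl rfl)
      · exact ih x hx

lemma wordP_prod (k : ℕ) : (wordP n k).prod = r ((k : ℕ) : ZMod n) := by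
  induction k with
  | zero => simp [wordP]
  | succ k ih =>
    simp only [wordP, List.prod_cons, ih, sr_mul_r, sr_mul_sr]
    push_cast
    ring_nf

lemma wordM_prod (k : ℕ) : (wordM n k).prod = r (-((k : ℕ) : ZMod n)) := by
  induction k with
  | zero => simp [wordM]
  | succ k ih =>
    simp only [wordM, List.prod_cons, ih, sr_mul_r, sr_mul_sr]
    push_cast
    ring_nf

lemma lengthWrt_le {G : Type*} [Group G] {S : Set G} {g : G} (L : List G)
    (h1 : ∀ x ∈ L, x ∈ S) (h3 : L.prod = g) : lengthWrt S g ≤ L.length :=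
  Nat.sInf_le ⟨L, h1, rfl, h3⟩

/-- the canonical representative of "class j": the element of word length `j`. -/
def rep (n j : ℕ) : DihedralGroup n :=
  if j % 2 = 0 then r ((j / 2 : ℕ) : ZMod n) else sr ((j / 2 + 1 : ℕ) : ZMod n)

section Dist

variable {l : ℕ}

lemma dC_cast (hl : 1 ≤ l) {k : ℕ} (hk : k ≤ l) :
    dC ((k : ℕ) : ZMod (2 * l)) = k := by
  haveI : NeZero (2 * l) := ⟨by omega⟩
  rcases Nat.eq_zero_or_pos k with rfl | hk0
  · simp [dC]
  · have hv : ((k : ℕ) : ZMod (2 * l)).val = k := ZMod.val_cast_of_lt (by omega)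
    have hne : ((k : ℕ) : ZMod (2 * l)) ≠ 0 := by
      intro h
      rw [h, ZMod.val_zero] at hv
      omega
    rw [dC, ZMod.neg_val, if_neg hne, hv]
    omega

lemma dR_cast (hl : 1 ≤ l) {m : ℕ} (hm1 : 1 ≤ m) (hm : m ≤ l) :
    dR ((m : ℕ) : ZMod (2 * l)) = m - 1 := by
  haveI : NeZero (2 * l) := ⟨by omega⟩
  have hv : ((m : ℕ) : ZMod (2 * l)).val = m := ZMod.val_cast_of_lt (by omega)
  have hne : ((m : ℕ) : ZMod (2 * l)) ≠ 0 := by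
    intro h; rw [h, ZMod.val_zero] at hv; omega
  rw [dR, val_sub_one hne, ZMod.neg_val, if_neg hne, hv]
  omega

lemma dR_neg_cast (hl : 1 ≤ l) {k : ℕ} (hk : k + 1 ≤ l) :
    dR (-((k : ℕ) : ZMod (2 * l))) = k := by
  haveI : NeZero (2 * l) := ⟨by omega⟩
  have h1 : (-((k : ℕ) : ZMod (2 * l)) - 1) = -(((k+1 : ℕ) : ZMod (2 * l))) := by
    push_cast; ring
  have hv1 : (((k+1 : ℕ)) : ZMod (2 * l)).val = k + 1 := ZMod.val_cast_of_lt (by omega)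
  have hne1 : (((k+1 : ℕ)) : ZMod (2 * l)) ≠ 0 := by
    intro h; rw [h, ZMod.val_zero] at hv1; omega
  have hvk : ((k : ℕ) : ZMod (2 * l)).val = k := ZMod.val_cast_of_lt (by omega)
  rw [dR, h1, neg_neg, ZMod.neg_val, if_neg hne1, hv1, hvk]
  omega

end Dist
section Length

variable {l : ℕ}

lemma lengthWrt_ge_r (hl : 1 ≤ l) {g : DihedralGroup (2*l)} {x : ZMod (2*l)}
    (hg : g = r x) (L0 : List (DihedralGroup (2*l))) (h1 : ∀ y ∈ L0, y ∈ dihGens (2*l))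
    (h3 : L0.prod = g) : 2 * dC x ≤ lengthWrt (dihGens (2*l)) g := by
  haveI : NeZero (2 * l) := ⟨by omega⟩
  unfold lengthWrt
  refine le_csInf ⟨L0.length, L0, h1, rfl, h3⟩ ?_
  rintro m ⟨L, hm, rfl, hp⟩
  exact (prod_len_bound L hm).1 x (hp.trans hg)

lemma lengthWrt_ge_sr (hl : 1 ≤ l) {g : DihedralGroup (2*l)} {x : ZMod (2*l)}
    (hg : g = sr x) (L0 : List (DihedralGroup (2*l))) (h1 : ∀ y ∈ L0, y ∈ dihGens (2*l))
    (h3 : L0.prod = g) : 2 * dR x + 1 ≤ lengthWrt (dihGens (2*l)) g := by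
  haveI : NeZero (2 * l) := ⟨by omega⟩
  unfold lengthWrt
  refine le_csInf ⟨L0.length, L0, h1, rfl, h3⟩ ?_
  rintro m ⟨L, hm, rfl, hp⟩
  exact (prod_len_bound L hm).2 x (hp.trans hg)

lemma lengthWrt_rep (hl : 4 ≤ l) {j : ℕ} (hj : j < 2 * l) :
    lengthWrt (dihGens (2*l)) (rep (2*l) j) = j ∧
      lengthWrt (dihGens (2*l)) (rep (2*l) j * sr 0) = j + 1 := by
  haveI : NeZero (2 * l) := ⟨by omega⟩
  by_cases hpar : j % 2 = 0
  · set k := j / 2 with hk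
    have hk2 : 2 * k = j := by omega
    have hkl : k + 1 ≤ l := by omega
    have hrep : rep (2*l) j = r ((k : ℕ) : ZMod (2*l)) := by rw [rep, if_pos hpar]
    have hrep2 : rep (2*l) j * sr 0 = sr (-((k : ℕ) : ZMod (2*l))) := by
      rw [hrep, r_mul_sr, zero_sub]
    constructor
    · have hup : lengthWrt (dihGens (2*l)) (rep (2*l) j) ≤ j := by
        have := lengthWrt_le (S := dihGens (2*l)) (g := rep (2*l) j) (wordP (2*l) k) (wordP_mem k)
          (by rw [wordP_prod, hrep])
        rwa [wordP_length, hk2] at this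
      have hlo := lengthWrt_ge_r (by omega) hrep (wordP (2*l) k) (wordP_mem k)
        (by rw [wordP_prod, hrep])
      rw [dC_cast (by omega) (by omega)] at hlo
      omega
    · have hup : lengthWrt (dihGens (2*l)) (rep (2*l) j * sr 0) ≤ j + 1 := by
        have := lengthWrt_le (S := dihGens (2*l)) (g := rep (2*l) j * sr 0) (sr 0 :: wordM (2*l) k)
          (by
            intro y hy
            rcases hy with _ | ⟨_, hy⟩
            · exact mem_dihGens.mpr (Or.inl rfl)
            · exact wordM_mem k y hy)
          (by rw [List.prod_cons, wordM_prod, sr_mul_r, hrep2, zero_add])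
        simp only [List.length_cons, wordM_length] at this
        omega
      have hlo := lengthWrt_ge_sr (by omega) hrep2 (sr 0 :: wordM (2*l) k)
        (by
          intro y hy
          rcases hy with _ | ⟨_, hy⟩
          · exact mem_dihGens.mpr (Or.inl rfl)
          · exact wordM_mem k y hy)
        (by rw [List.prod_cons, wordM_prod, sr_mul_r, hrep2, zero_add])
      rw [dR_neg_cast (by omega) hkl] at hlo
      omega
  · set m := j / 2 + 1 with hm
    have hm2 : 2 * m - 1 = j := by omega
    have hm1 : 1 ≤ m := by omega
    have hml : m ≤ l := by omega
    have hrep : rep (2*l) j = sr ((m : ℕ) : ZMod (2*l)) := by rw [rep, if_neg hpar]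
    have hrep2 : rep (2*l) j * sr 0 = r (-((m : ℕ) : ZMod (2*l))) := by
      rw [hrep, sr_mul_sr, zero_sub]
    have hword : (sr 1 :: wordP (2*l) (m-1)).prod = rep (2*l) j := by
      rw [List.prod_cons, wordP_prod, sr_mul_r, hrep]
      congr 1
      have : ((m - 1 : ℕ) : ZMod (2*l)) = ((m : ℕ) : ZMod (2*l)) - 1 := by
        rw [Nat.cast_sub hm1, Nat.cast_one]
      rw [this]; ring
    have hmemw : ∀ y ∈ sr (1 : ZMod (2*l)) :: wordP (2*l) (m-1), y ∈ dihGens (2*l) := by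
      intro y hy
      rcases hy with _ | ⟨_, hy⟩
      · exact mem_dihGens.mpr (Or.inr rfl)
      · exact wordP_mem _ y hy
    constructor
    · have hup : lengthWrt (dihGens (2*l)) (rep (2*l) j) ≤ j := by
        have := lengthWrt_le (S := dihGens (2*l)) (g := rep (2*l) j) _ hmemw hword
        simp only [List.length_cons, wordP_length] at this
        omega
      have hlo := lengthWrt_ge_sr (by omega) hrep.symm.symm _ hmemw hword
      rw [dR_cast (by omega) hm1 hml] at hlo
      omega
    · have hword2 : (wordM (2*l) m).prod = rep (2*l) j * sr 0 := by
        rw [wordM_prod, hrep2]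
      have hup : lengthWrt (dihGens (2*l)) (rep (2*l) j * sr 0) ≤ j + 1 := by
        have := lengthWrt_le (S := dihGens (2*l)) (g := rep (2*l) j * sr 0) _ (wordM_mem m) hword2
        rw [wordM_length] at this
        omega
      have hlo := lengthWrt_ge_r (by omega) hrep2 _ (wordM_mem m) hword2
      rw [dC_neg, dC_cast (by omega) hml] at hlo
      omega

end Length
section Count

/-- number of sample points mapping to `g` -/
def cnt (n t : ℕ) (g : DihedralGroup n) : ℕ :=
  ∑ ε : Fin t → Bool, if altProd n t ε = g then 1 else 0

lemma altProd_snoc (n t : ℕ) (f : Fin t → Bool) (x : Bool) :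
    altProd n (t+1) (Fin.snoc f x) =
      altProd n t f * (if x then (if t % 2 = 0 then sr 0 else sr 1) else 1) := by
  unfold altProd
  rw [List.finRange_succ_last, List.map_append, List.prod_append, List.map_map]
  congr 1
  · congr 1
    apply List.map_congr_left
    intro i _
    simp [Fin.snoc_castSucc]
  · simp [Fin.snoc_last]

/-- the equivalence `(Fin t → Bool) × Bool ≃ (Fin (t+1) → Bool)` by `snoc` -/
def snocEquiv (t : ℕ) : ((Fin t → Bool) × Bool) ≃ (Fin (t+1) → Bool) where
  toFun p := Fin.snoc p.1 p.2
  invFun ε := (fun i => ε i.castSucc, ε (Fin.last t))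
  left_inv p := by
    refine Prod.ext ?_ ?_
    · funext i; simp
    · simp
  right_inv ε := by
    funext i
    rcases Fin.eq_castSucc_or_eq_last i with ⟨j, rfl⟩ | rfl
    · simp
    · simp

lemma cnt_succ (n t : ℕ) (g : DihedralGroup n) :
    cnt n (t+1) g = cnt n t g + cnt n t (g * (if t % 2 = 0 then sr 0 else sr 1)) := by
  set w : DihedralGroup n := if t % 2 = 0 then sr 0 else sr 1 with hw
  have hww : w * w = 1 := by
    rcases Nat.eq_zero_or_pos (t % 2) with h | h
    · rw [hw, if_pos h]; exact sr_mul_self 0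
    · rw [hw, if_neg (by omega)]; exact sr_mul_self 1
  rw [cnt, ← Equiv.sum_comp (snocEquiv t) (fun ε => if altProd n (t+1) ε = g then 1 else 0)]
  simp only [snocEquiv, Equiv.coe_fn_mk]
  rw [Fintype.sum_prod_type]
  have hsplit : ∀ f : Fin t → Bool,
      (∑ x : Bool, if altProd n (t+1) (Fin.snoc f x) = g then 1 else 0)
        = (if altProd n t f = g then 1 else 0) + (if altProd n t f * w = g then 1 else 0) := by
    intro f
    rw [Fintype.sum_bool]
    simp only [altProd_snoc, ← hw]
    simp [add_comm]
  refine (Finset.sum_congr rfl (fun f _ => hsplit f)).trans ?_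
  rw [Finset.sum_add_distrib]
  congr 1
  rw [cnt]
  apply Finset.sum_congr rfl
  intro f _
  have : (altProd n t f * w = g) ↔ (altProd n t f = g * w) := by
    constructor
    · intro h; rw [← h, mul_assoc, hww, mul_one]
    · intro h; rw [h, mul_assoc, hww, mul_one]
  simp only [this]

lemma count_pred (n t : ℕ) (P : DihedralGroup n → Prop) [DecidablePred P] [NeZero n] :
    (∑ ε : Fin t → Bool, if P (altProd n t ε) then 1 else 0)
      = ∑ g : DihedralGroup n, if P g then cnt n t g else 0 := by
  have : ∀ ε : Fin t → Bool,
      (if P (altProd n t ε) then 1 else 0)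
        = ∑ g : DihedralGroup n, (if P g then (if altProd n t ε = g then 1 else 0) else 0) := by
    intro ε
    rw [Finset.sum_eq_single (altProd n t ε)]
    · simp
    · intro g _ hg
      simp [Ne.symm hg]
    · intro h; exact absurd (Finset.mem_univ _) h
  simp_rw [this]
  rw [Finset.sum_comm]
  apply Finset.sum_congr rfl
  intro g _
  by_cases hP : P g
  · simp only [if_pos hP, cnt]
  · simp only [if_neg hP, Finset.sum_const_zero]

lemma cnt_zero (n : ℕ) (g : DihedralGroup n) :
    cnt n 0 g = if (1 : DihedralGroup n) = g then 1 else 0 := by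
  rw [cnt]
  rw [Finset.sum_eq_single (fun _ : Fin 0 => false)]
  · have : altProd n 0 (fun _ : Fin 0 => false) = 1 := by unfold altProd; simp
    rw [this]
  · intro f _ hf
    exact absurd (funext fun i => i.elim0) hf
  · intro h; exact absurd (Finset.mem_univ _) h

end Count
section Structure

lemma rep_up (n j : ℕ) : rep n j * sr 0 * sr 1 = rep n (j + 2) := by
  by_cases hpar : j % 2 = 0
  · have h2 : (j + 2) % 2 = 0 := by omega
    have h3 : (j + 2) / 2 = j / 2 + 1 := by omega
    rw [rep, rep, if_pos hpar, if_pos h2, h3, r_mul_sr, sr_mul_sr]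
    congr 1
    push_cast
    ring
  · have h2 : ¬ (j + 2) % 2 = 0 := by omega
    have h3 : (j + 2) / 2 + 1 = (j / 2 + 1) + 1 := by omega
    rw [rep, rep, if_neg hpar, if_neg h2, h3, sr_mul_sr, r_mul_sr]
    congr 1
    push_cast
    ring

lemma rep_down (n : ℕ) {j : ℕ} (hj : 2 ≤ j) : rep n j * sr 1 = rep n (j - 2) * sr 0 := by
  by_cases hpar : j % 2 = 0
  · have h2 : (j - 2) % 2 = 0 := by omega
    have h3 : (j - 2) / 2 = j / 2 - 1 := by omega
    have h4 : 1 ≤ j / 2 := by omega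
    rw [rep, rep, if_pos hpar, if_pos h2, h3, r_mul_sr, r_mul_sr]
    congr 1
    rw [Nat.cast_sub h4, Nat.cast_one]
    ring
  · have h2 : ¬ (j - 2) % 2 = 0 := by omega
    have h3 : (j - 2) / 2 + 1 = j / 2 := by omega
    have h4 : 1 ≤ j / 2 := by omega
    rw [rep, rep, if_neg hpar, if_neg h2, h3, sr_mul_sr, sr_mul_sr]
    congr 1
    have e1 : 1 + j/2 = (j/2 - 1) + 2 := by omega
    rw [show j / 2 + 1 = 1 + j / 2 by omega, e1]
    push_cast
    rw [Nat.cast_sub h4, Nat.cast_one]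
    ring

lemma rep_zero_down (n : ℕ) : rep n 0 * sr 1 = rep n 1 := by
  rw [rep, rep]
  norm_num

lemma rep_one_down (n : ℕ) : rep n 1 * sr 1 = rep n 0 := by
  rw [rep, rep]
  norm_num

lemma rep_top_even {l : ℕ} (hl : 1 ≤ l) :
    rep (2*l) (2*l) = rep (2*l) (2*l - 1) * sr 0 := by
  have h1 : (2*l) % 2 = 0 := by omega
  have h2 : ¬ (2*l - 1) % 2 = 0 := by omega
  have h3 : (2*l - 1) / 2 + 1 = l := by omega
  have h4 : (2*l) / 2 = l := by omega
  rw [rep, rep, if_pos h1, if_neg h2, h3, h4, sr_mul_sr]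
  congr 1
  have : ((2 * l : ℕ) : ZMod (2*l)) = 0 := ZMod.natCast_self _
  have h5 : ((l : ℕ) : ZMod (2*l)) + ((l : ℕ) : ZMod (2*l)) = 0 := by
    rw [← Nat.cast_add, show l + l = 2 * l by ring, this]
  linear_combination h5

lemma rep_top_odd {l : ℕ} (hl : 2 ≤ l) :
    rep (2*l) (2*l + 1) = rep (2*l) (2*l - 2) * sr 0 := by
  have h1 : ¬ (2*l + 1) % 2 = 0 := by omega
  have h2 : (2*l - 2) % 2 = 0 := by omega
  have h3 : (2*l + 1) / 2 + 1 = l + 1 := by omega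
  have h4 : (2*l - 2) / 2 = l - 1 := by omega
  rw [rep, rep, if_neg h1, if_pos h2, h3, h4, r_mul_sr]
  congr 1
  have h0 : ((2 * l : ℕ) : ZMod (2*l)) = 0 := ZMod.natCast_self _
  have h5 : ((l + 1 : ℕ) : ZMod (2*l)) + ((l - 1 : ℕ) : ZMod (2*l)) = 0 := by
    rw [← Nat.cast_add, show l + 1 + (l - 1) = 2 * l by omega, h0]
  push_cast [Nat.cast_sub (by omega : 1 ≤ l)] at h5 ⊢
  linear_combination h5

lemma rep_ne_one {l j : ℕ} (hl : 4 ≤ l) (hj1 : 1 ≤ j) (hj : j < 2*l) :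
    rep (2*l) j ≠ 1 ∧ rep (2*l) j * sr 0 ≠ 1 := by
  haveI : NeZero (2*l) := ⟨by omega⟩
  by_cases hpar : j % 2 = 0
  · have hk1 : 1 ≤ j / 2 := by omega
    have hkv : ((j/2 : ℕ) : ZMod (2*l)).val = j / 2 := ZMod.val_cast_of_lt (by omega)
    rw [rep, if_pos hpar]
    constructor
    · rw [one_def]
      intro h
      have : ((j/2 : ℕ) : ZMod (2*l)) = 0 := by injection h
      rw [this, ZMod.val_zero] at hkv
      omega
    · rw [r_mul_sr, one_def]
      intro h
      exact absurd h (by intro h; cases h)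
  · rw [rep, if_neg hpar]
    have hm1 : 1 ≤ j / 2 + 1 := by omega
    have hmv : ((j/2 + 1 : ℕ) : ZMod (2*l)).val = j / 2 + 1 := ZMod.val_cast_of_lt (by omega)
    constructor
    · rw [one_def]
      intro h
      exact absurd h (by intro h; cases h)
    · rw [sr_mul_sr, one_def]
      intro h
      have : (0 : ZMod (2*l)) - ((j/2 + 1 : ℕ) : ZMod (2*l)) = 0 := by injection h
      have h2 : ((j/2 + 1 : ℕ) : ZMod (2*l)) = 0 := by linear_combination -this
      rw [h2, ZMod.val_zero] at hmv
      omega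

end Structure
section Mono

lemma anti_of_step {f : ℕ → ℕ} {m : ℕ} (h : ∀ j, j + 1 < m → f (j+1) ≤ f j) :
    ∀ i j, i ≤ j → j < m → f j ≤ f i := by
  intro i j hij
  induction hij with
  | refl => intro _; exact le_rfl
  | @step p hp ih =>
    intro hj
    exact le_trans (h p (by omega)) (ih (by omega))

variable {l : ℕ}

/-- total count of the two elements of "class j" -/
def qq (l t j : ℕ) : ℕ := cnt (2*l) t (rep (2*l) j) + cnt (2*l) t (rep (2*l) j * sr 0)

lemma invariant (hl : 4 ≤ l) (t : ℕ) :
    (∀ j, j + 1 < 2*l → qq l t (j+1) ≤ qq l t j) ∧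
      (t % 2 = 1 → ∀ g : DihedralGroup (2*l), cnt (2*l) t (g * sr 0) = cnt (2*l) t g) := by
  induction t with
  | zero =>
    refine ⟨?_, by omega⟩
    intro j hj
    have h := rep_ne_one hl (by omega : 1 ≤ j+1) (by omega)
    have e1 : cnt (2*l) 0 (rep (2*l) (j+1)) = 0 := by
      rw [cnt_zero, if_neg (fun hh => h.1 hh.symm)]
    have e2 : cnt (2*l) 0 (rep (2*l) (j+1) * sr 0) = 0 := by
      rw [cnt_zero, if_neg (fun hh => h.2 hh.symm)]
    rw [qq, e1, e2]
    omega
  | succ t ih =>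
    obtain ⟨ihmono, ihsym⟩ := ih
    by_cases hpar : t % 2 = 0
    · -- a-step
      have hstep : ∀ g : DihedralGroup (2*l),
          cnt (2*l) (t+1) g = cnt (2*l) t g + cnt (2*l) t (g * sr 0) := by
        intro g
        rw [cnt_succ, if_pos hpar]
      constructor
      · intro j hj
        have e : ∀ i, qq l (t+1) i = qq l t i + qq l t i := by
          intro i
          rw [qq, hstep, hstep, mul_assoc, sr_mul_self, mul_one, qq]
          ring
        rw [e, e]
        have := ihmono j hj
        omega
      · intro _ g
        rw [hstep, hstep, mul_assoc, sr_mul_self, mul_one]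
        ring
    · -- b-step
      have hpar1 : t % 2 = 1 := by omega
      have hsym := ihsym hpar1
      have hstep : ∀ g : DihedralGroup (2*l),
          cnt (2*l) (t+1) g = cnt (2*l) t g + cnt (2*l) t (g * sr 1) := by
        intro g
        rw [cnt_succ, if_neg hpar]
      refine ⟨?_, by omega⟩
      have hqM : ∀ j, qq l t j = 2 * cnt (2*l) t (rep (2*l) j) := by
        intro j
        rw [qq, hsym (rep (2*l) j)]
        omega
      have hMmono : ∀ i j, i ≤ j → j < 2*l →
          cnt (2*l) t (rep (2*l) j) ≤ cnt (2*l) t (rep (2*l) i) := by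
        intro i j hij hj
        have h2 := anti_of_step ihmono i j hij hj
        rw [hqM, hqM] at h2
        omega
      have hQ : ∀ j, qq l (t+1) j = qq l t j
          + cnt (2*l) t (rep (2*l) j * sr 1) + cnt (2*l) t (rep (2*l) j * sr 0 * sr 1) := by
        intro j
        rw [qq, hstep, hstep, qq]
        ring
      intro j hj
      rw [hQ (j+1), hQ j, hqM (j+1), hqM j]
      rcases Nat.lt_or_ge j 1 with hj0 | hj1
      · -- j = 0
        obtain rfl : j = 0 := by omega
        norm_num
        rw [rep_zero_down, rep_one_down, rep_up, rep_up]
        norm_num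
        have hm1 := hMmono 0 1 (by omega) (by omega)
        have hm2 := hMmono 2 3 (by omega) (by omega)
        omega
      rcases Nat.lt_or_ge j 2 with hj1' | hj2
      · -- j = 1
        obtain rfl : j = 1 := by omega
        norm_num
        rw [rep_one_down, rep_down (2*l) (show (2:ℕ) ≤ 2 by omega), rep_up, rep_up]
        simp only [hsym]
        norm_num
        have hm1 := hMmono 1 2 (by omega) (by omega)
        have hm2 := hMmono 3 4 (by omega) (by omega)
        omega
      rcases Nat.lt_or_ge j (2*l - 3) with hjm | hjtop
      · -- 2 ≤ j ≤ 2l-4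
        rw [rep_down (2*l) (show (2:ℕ) ≤ j + 1 by omega),
          rep_down (2*l) (show (2:ℕ) ≤ j by omega), rep_up, rep_up]
        simp only [hsym]
        have hm1 := hMmono j (j+1) (by omega) (by omega)
        have hm2 := hMmono (j-2) (j+1-2) (by omega) (by omega)
        have hm3 := hMmono (j+2) (j+1+2) (by omega) (by omega)
        omega
      rcases Nat.lt_or_ge j (2*l - 2) with hj3 | hj4
      · -- j = 2l - 3
        obtain rfl : j = 2*l - 3 := by omega
        rw [rep_down (2*l) (show (2:ℕ) ≤ 2*l - 3 + 1 by omega),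
          rep_down (2*l) (show (2:ℕ) ≤ 2*l - 3 by omega), rep_up, rep_up,
          show 2*l - 3 + 1 + 2 = 2*l by omega, rep_top_even (show 1 ≤ l by omega)]
        simp only [hsym]
        have hm1 := hMmono (2*l-3) (2*l-3+1) (by omega) (by omega)
        have hm2 := hMmono (2*l-3-2) (2*l-3+1-2) (by omega) (by omega)
        have hm3 := hMmono (2*l-3+2) (2*l-1) (by omega) (by omega)
        have hm4 := hMmono (2*l-1) (2*l-3+2) (by omega) (by omega)
        omega
      · -- j = 2l - 2
        obtain rfl : j = 2*l - 2 := by omega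
        rw [rep_down (2*l) (show (2:ℕ) ≤ 2*l - 2 + 1 by omega),
          rep_down (2*l) (show (2:ℕ) ≤ 2*l - 2 by omega), rep_up, rep_up,
          show 2*l - 2 + 1 + 2 = 2*l + 1 by omega,
          show 2*l - 2 + 2 = 2*l by omega,
          rep_top_odd (show 2 ≤ l by omega), rep_top_even (show 1 ≤ l by omega)]
        simp only [hsym]
        have hm1 := hMmono (2*l-2) (2*l-2+1) (by omega) (by omega)
        have hm2 := hMmono (2*l-2-2) (2*l-2+1-2) (by omega) (by omega)
        have hm3 := hMmono (2*l-2+1) (2*l-1) (by omega) (by omega)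
        have hm4 := hMmono (2*l-1) (2*l-2+1) (by omega) (by omega)
        have hm5 := hMmono (2*l-2) (2*l-2-2+2) (by omega) (by omega)
        have hm6 := hMmono (2*l-2-2+2) (2*l-2) (by omega) (by omega)
        omega

end Mono
section Pairing

variable {l : ℕ}

/-- pairing `Fin (2l) × Bool → D_{2l}`: `(j, false) ↦ rep j`, `(j, true) ↦ rep j * a`. -/
def pairFn (l : ℕ) (p : Fin (2*l) × Bool) : DihedralGroup (2*l) :=
  if p.2 then rep (2*l) (p.1 : ℕ) * sr 0 else rep (2*l) (p.1 : ℕ)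

lemma cast_sub_eq (hl : 1 ≤ l) (x : ZMod (2*l)) :
    ((2*l - x.val : ℕ) : ZMod (2*l)) = - x := by
  haveI : NeZero (2*l) := ⟨by omega⟩
  have hv : x.val ≤ 2*l := le_of_lt (ZMod.val_lt x)
  rw [Nat.cast_sub hv, ZMod.natCast_self, ZMod.natCast_zmod_val]
  ring

lemma pairFn_surj (hl : 4 ≤ l) : Function.Surjective (pairFn l) := by
  haveI : NeZero (2*l) := ⟨by omega⟩
  intro g
  cases g with
  | r x =>
    have hv : x.val < 2*l := ZMod.val_lt x
    by_cases hc : x.val + 1 ≤ l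
    · refine ⟨(⟨2 * x.val, by omega⟩, false), ?_⟩
      simp only [pairFn, Bool.false_eq_true, if_false]
      rw [rep, if_pos (by omega : (2 * x.val) % 2 = 0),
        show (2 * x.val) / 2 = x.val by omega, ZMod.natCast_zmod_val]
    · refine ⟨(⟨2*(2*l - x.val) - 1, by omega⟩, true), ?_⟩
      simp only [pairFn, if_true]
      rw [rep, if_neg (by omega : ¬ (2*(2*l - x.val) - 1) % 2 = 0),
        show (2*(2*l - x.val) - 1) / 2 + 1 = 2*l - x.val by omega,
        sr_mul_sr, cast_sub_eq (by omega)]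
      congr 1
      ring
  | sr x =>
    have hv : x.val < 2*l := ZMod.val_lt x
    rcases Nat.eq_zero_or_pos x.val with h0 | h1
    · refine ⟨(⟨0, by omega⟩, true), ?_⟩
      simp only [pairFn, if_true]
      rw [rep, if_pos (by omega : (0:ℕ) % 2 = 0)]
      norm_num
      exact ((ZMod.val_eq_zero x).mp h0).symm
    · by_cases hc : x.val ≤ l
      · refine ⟨(⟨2 * x.val - 1, by omega⟩, false), ?_⟩
        simp only [pairFn, Bool.false_eq_true, if_false]
        rw [rep, if_neg (by omega : ¬ (2 * x.val - 1) % 2 = 0),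
          show (2 * x.val - 1) / 2 + 1 = x.val by omega, ZMod.natCast_zmod_val]
      · refine ⟨(⟨2*(2*l - x.val), by omega⟩, true), ?_⟩
        simp only [pairFn, if_true]
        rw [rep, if_pos (by omega : (2*(2*l - x.val)) % 2 = 0),
          show (2*(2*l - x.val)) / 2 = 2*l - x.val by omega,
          r_mul_sr, cast_sub_eq (by omega)]
      
        congr 1
        ring

lemma pairFn_bij (hl : 4 ≤ l) : Function.Bijective (pairFn l) := by
  haveI : NeZero (2*l) := ⟨by omega⟩
  rw [Fintype.bijective_iff_surjective_and_card]
  refine ⟨pairFn_surj hl, ?_⟩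
  rw [Fintype.card_prod, Fintype.card_fin, Fintype.card_bool, DihedralGroup.card]
  ring

end Pairing
end Stmt6Aux


open Stmt6Aux in
/-- In `D_{2l}` (l ≥ 4), for the alternating random product `Y_t`,
`P(|Y_t| ∈ [3l/2, 2l]) ≤ P(|Y_t| ∈ [l/2, 3l/2])`.
(Probabilities are expressed by counting uniform sample points, and half-integer
bounds are cleared by multiplying word lengths by 2.) -/
theorem stmt6 (l : ℕ) (hl : 4 ≤ l) (t : ℕ) :
    Nat.card {ε : Fin t → Bool //
        3 * l ≤ 2 * lengthWrt (dihGens (2 * l)) (altProd (2 * l) t ε) ∧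
        2 * lengthWrt (dihGens (2 * l)) (altProd (2 * l) t ε) ≤ 4 * l} ≤
      Nat.card {ε : Fin t → Bool //
        l ≤ 2 * lengthWrt (dihGens (2 * l)) (altProd (2 * l) t ε) ∧
        2 * lengthWrt (dihGens (2 * l)) (altProd (2 * l) t ε) ≤ 3 * l} := by
  classical
  haveI : NeZero (2*l) := ⟨by omega⟩
  have key : ∀ (P : DihedralGroup (2*l) → Prop),
      Nat.card {ε : Fin t → Bool // P (altProd (2*l) t ε)}
        = ∑ g : DihedralGroup (2*l), if P g then cnt (2*l) t g else 0 := by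
    intro P
    rw [Nat.card_eq_fintype_card, Fintype.card_subtype, Finset.card_filter]
    exact count_pred (2*l) t P
  have len : DihedralGroup (2*l) → ℕ := fun g => lengthWrt (dihGens (2*l)) g
  set PA : DihedralGroup (2*l) → Prop := fun g =>
    3*l ≤ 2 * lengthWrt (dihGens (2*l)) g ∧ 2 * lengthWrt (dihGens (2*l)) g ≤ 4*l with hPA
  set PB : DihedralGroup (2*l) → Prop := fun g =>
    l ≤ 2 * lengthWrt (dihGens (2*l)) g ∧ 2 * lengthWrt (dihGens (2*l)) g ≤ 3*l with hPB
  have e1 : Nat.card {ε : Fin t → Bool //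
      3 * l ≤ 2 * lengthWrt (dihGens (2 * l)) (altProd (2 * l) t ε) ∧
      2 * lengthWrt (dihGens (2 * l)) (altProd (2 * l) t ε) ≤ 4 * l}
        = ∑ g : DihedralGroup (2*l), if PA g then cnt (2*l) t g else 0 := by
    rw [key PA]
    apply Finset.sum_congr rfl
    intro g _
    congr
  have e2 : Nat.card {ε : Fin t → Bool //
      l ≤ 2 * lengthWrt (dihGens (2 * l)) (altProd (2 * l) t ε) ∧
      2 * lengthWrt (dihGens (2 * l)) (altProd (2 * l) t ε) ≤ 3 * l}
        = ∑ g : DihedralGroup (2*l), if PB g then cnt (2*l) t g else 0 := by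
    rw [key PB]
    apply Finset.sum_congr rfl
    intro g _
    congr
  rw [e1, e2]
  clear e1 e2
  -- move to the pairing
  have hbij := pairFn_bij hl
  have transfer : ∀ (P : DihedralGroup (2*l) → Prop) (_ : DecidablePred P),
      (∑ g : DihedralGroup (2*l), if P g then cnt (2*l) t g else 0)
        = ∑ j : Fin (2*l),
            ((if P (rep (2*l) (j:ℕ) * sr 0) then cnt (2*l) t (rep (2*l) (j:ℕ) * sr 0) else 0)
              + (if P (rep (2*l) (j:ℕ)) then cnt (2*l) t (rep (2*l) (j:ℕ)) else 0)) := by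
    intro P _
    rw [← Fintype.sum_bijective (pairFn l) hbij
      (fun p => if P (pairFn l p) then cnt (2*l) t (pairFn l p) else 0)
      (fun g => if P g then cnt (2*l) t g else 0) (fun p => rfl)]
    rw [Fintype.sum_prod_type]
    apply Finset.sum_congr rfl
    intro j _
    rw [Fintype.sum_bool]
    simp only [pairFn, if_true, Bool.false_eq_true, if_false]
  rw [transfer PA inferInstance, transfer PB inferInstance]
  clear transfer
  set c : ℕ := (3*l - 1)/2 with hc
  set lo : ℕ := (l+1)/2 with hlo
  set c' : ℕ := (3*l - 2)/2 with hc'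
  set s : ℕ := (l+1)/2 with hs
  have hmono := (invariant hl t).1
  have hanti := anti_of_step hmono
  -- step A: bound above by the class sums over [c, 2l-1]
  have stepA : (∑ j : Fin (2*l),
      ((if PA (rep (2*l) (j:ℕ) * sr 0) then cnt (2*l) t (rep (2*l) (j:ℕ) * sr 0) else 0)
        + (if PA (rep (2*l) (j:ℕ)) then cnt (2*l) t (rep (2*l) (j:ℕ)) else 0)))
      ≤ ∑ j : Fin (2*l), (if c ≤ (j:ℕ) then qq l t (j:ℕ) else 0) := by
    apply Finset.sum_le_sum
    intro j _
    have hlenj := lengthWrt_rep hl j.isLt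
    have ecomb : (if c ≤ (j:ℕ) then qq l t (j:ℕ) else 0)
        = (if c ≤ (j:ℕ) then cnt (2*l) t (rep (2*l) (j:ℕ) * sr 0) else 0)
          + (if c ≤ (j:ℕ) then cnt (2*l) t (rep (2*l) (j:ℕ)) else 0) := by
      by_cases h : c ≤ (j:ℕ)
      · simp [h, qq]; ring
      · simp [h]
    rw [ecomb]
    apply add_le_add
    · by_cases hP : PA (rep (2*l) (j:ℕ) * sr 0)
      · have hc2 : c ≤ (j:ℕ) := by
          rw [hPA] at hP
          rw [hlenj.2] at hP
          omega
        rw [if_pos hP, if_pos hc2]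
      · rw [if_neg hP]; exact Nat.zero_le _
    · by_cases hP : PA (rep (2*l) (j:ℕ))
      · have hc2 : c ≤ (j:ℕ) := by
          rw [hPA] at hP
          rw [hlenj.1] at hP
          omega
        rw [if_pos hP, if_pos hc2]
      · rw [if_neg hP]; exact Nat.zero_le _
  -- step B : bound below
  have stepB : (∑ j : Fin (2*l), (if lo ≤ (j:ℕ) ∧ (j:ℕ) ≤ c' then qq l t (j:ℕ) else 0))
      ≤ ∑ j : Fin (2*l),
      ((if PB (rep (2*l) (j:ℕ) * sr 0) then cnt (2*l) t (rep (2*l) (j:ℕ) * sr 0) else 0)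
        + (if PB (rep (2*l) (j:ℕ)) then cnt (2*l) t (rep (2*l) (j:ℕ)) else 0)) := by
    apply Finset.sum_le_sum
    intro j _
    have hlenj := lengthWrt_rep hl j.isLt
    by_cases h : lo ≤ (j:ℕ) ∧ (j:ℕ) ≤ c'
    · have hP1 : PB (rep (2*l) (j:ℕ) * sr 0) := by
        simp only [hPB]; rw [hlenj.2]; omega
      have hP2 : PB (rep (2*l) (j:ℕ)) := by
        simp only [hPB]; rw [hlenj.1]; omega
      rw [if_pos h, if_pos hP1, if_pos hP2, qq]
      omega
    · rw [if_neg h]; exact Nat.zero_le _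
  refine le_trans stepA (le_trans ?_ stepB)
  -- middle step : interval shift using monotonicity
  rw [Fin.sum_univ_eq_sum_range (fun m => if c ≤ m then qq l t m else 0) (2*l),
    Fin.sum_univ_eq_sum_range (fun m => if lo ≤ m ∧ m ≤ c' then qq l t m else 0) (2*l)]
  rw [← Finset.sum_filter, ← Finset.sum_filter]
  have hf1 : (Finset.range (2*l)).filter (fun m => c ≤ m) = Finset.Icc c (2*l - 1) := by
    ext m
    simp only [Finset.mem_filter, Finset.mem_range, Finset.mem_Icc]
    omega
  have hf2 : (Finset.range (2*l)).filter (fun m => lo ≤ m ∧ m ≤ c') = Finset.Icc lo c' := by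
    ext m
    simp only [Finset.mem_filter, Finset.mem_range, Finset.mem_Icc]
    omega
  rw [hf1, hf2]
  have hicc : Finset.Icc c (2*l - 1) = (Finset.Icc (c - s) (2*l - 1 - s)).map (addRightEmbedding s) := by
    rw [Finset.map_add_right_Icc]
    congr 1 <;> omega
  rw [hicc, Finset.sum_map]
  simp only [addRightEmbedding_apply]
  calc ∑ m ∈ Finset.Icc (c - s) (2*l - 1 - s), qq l t (m + s)
      ≤ ∑ m ∈ Finset.Icc (c - s) (2*l - 1 - s), qq l t m := by
        apply Finset.sum_le_sum
        intro m hm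
        rw [Finset.mem_Icc] at hm
        exact hanti m (m + s) (by omega) (by omega)
    _ ≤ ∑ m ∈ Finset.Icc lo c', qq l t m := by
        apply Finset.sum_le_sum_of_subset
        apply Finset.Icc_subset_Icc <;> omega
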